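/- arXiv:2604.06362 — 2 statements merged into one kernel-verified Lean document; each statement's English description precedes it below -/
import Mathlib

section
/- Suppose h is twice continuously differentiable in x with |∂_x h(x,t)| ≤ M for all (x,t). Then ∂_x φ₁ + ∂_y φ₂ = 0 on the fluid region, and there exists a constant C > 0, depending only on β_s, β_b and M, such that for all t ∈ [0,T], x ∈ [0,L] and 0 ≤ y ≤ h(x,t) one has |∂_x φ₁(x,y,t)| ≤ C, |∂_y φ₁(x,y,t)| ≤ C, |∂_y φ₂(x,y,t)| ≤ C, and |∂_x φ₂(x,y,t)| ≤ C·(1 + |∂_{xx} h(x,t)|). -/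
noncomputable def lamS (βs s : ℝ) : ℝ := s / βs
noncomputable def lamB (βb s : ℝ) : ℝ := s / βb
noncomputable def Dcoef (βs βb s : ℝ) : ℝ :=
  lamS βs s * lamB βb s + 4 * (lamS βs s + lamB βb s) + 12
noncomputable def aCoef (βs βb s : ℝ) : ℝ :=
  -2 * (lamS βs s + lamB βb s + lamS βs s * lamB βb s) / Dcoef βs βb s
noncomputable def bCoef (βs βb s : ℝ) : ℝ :=
  3 * lamB βb s * (lamS βs s + 2) / Dcoef βs βb s
noncomputable def cCoef (βs βb s : ℝ) : ℝ :=
  6 * (lamS βs s + 2) / Dcoef βs βb s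
noncomputable def Phi (βs βb s ξ : ℝ) : ℝ :=
  aCoef βs βb s * ξ ^ 3 + bCoef βs βb s * ξ ^ 2 + cCoef βs βb s * ξ
noncomputable def psiF (βs βb : ℝ) (h : ℝ → ℝ → ℝ) (x y t : ℝ) : ℝ :=
  h x t * Phi βs βb (h x t) (y / h x t)
noncomputable def phi1 (βs βb : ℝ) (h : ℝ → ℝ → ℝ) (x y t : ℝ) : ℝ :=
  -deriv (fun y' => psiF βs βb h x y' t) y
noncomputable def phi2 (βs βb : ℝ) (h : ℝ → ℝ → ℝ) (x y t : ℝ) : ℝ :=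
  deriv (fun x' => psiF βs βb h x' y t) x


noncomputable section

def Ef (βs βb s : ℝ) : ℝ := s^2 + 4*(βs+βb)*s + 12*(βs*βb)
def Ed (βs βb s : ℝ) : ℝ := 2*s + 4*(βs+βb)
def Pf (βs βb s : ℝ) : ℝ := s^3 + 4*(βs+βb)*s^2 + 12*(βs*βb)*s
def Pd (βs βb s : ℝ) : ℝ := 3*s^2 + 4*(βs+βb)*(2*s) + 12*(βs*βb)
def Af (βs βb s : ℝ) : ℝ := (-2*(s+βs+βb)) / Pf βs βb s
def Bf (βs βb s : ℝ) : ℝ := (3*(s+2*βs)) / Ef βs βb s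
def Cf (βs βb s : ℝ) : ℝ := (6*βb*(s+2*βs)) / Ef βs βb s
def nA (βs βb s : ℝ) : ℝ := (-2) * Pf βs βb s - (-2*(s+βs+βb)) * Pd βs βb s
def nB (βs βb s : ℝ) : ℝ := 3 * Ef βs βb s - (3*(s+2*βs)) * Ed βs βb s
def nC (βs βb s : ℝ) : ℝ := (6*βb) * Ef βs βb s - (6*βb*(s+2*βs)) * Ed βs βb s
def dAf (βs βb s : ℝ) : ℝ := nA βs βb s / (Pf βs βb s)^2
def dBf (βs βb s : ℝ) : ℝ := nB βs βb s / (Ef βs βb s)^2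
def dCf (βs βb s : ℝ) : ℝ := nC βs βb s / (Ef βs βb s)^2
def nAd (βs βb s : ℝ) : ℝ := 2*(s+βs+βb)*(6*s+8*(βs+βb))
def nBd (βs βb s : ℝ) : ℝ := -6*(s+2*βs)
def nCd (βs βb s : ℝ) : ℝ := -12*βb*(s+2*βs)
def ddAf (βs βb s : ℝ) : ℝ :=
  (nAd βs βb s * (Pf βs βb s)^2 - nA βs βb s * (2 * Pf βs βb s * Pd βs βb s)) / ((Pf βs βb s)^2)^2
def ddBf (βs βb s : ℝ) : ℝ :=
  (nBd βs βb s * (Ef βs βb s)^2 - nB βs βb s * (2 * Ef βs βb s * Ed βs βb s)) / ((Ef βs βb s)^2)^2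
def ddCf (βs βb s : ℝ) : ℝ :=
  (nCd βs βb s * (Ef βs βb s)^2 - nC βs βb s * (2 * Ef βs βb s * Ed βs βb s)) / ((Ef βs βb s)^2)^2

end

theorem Ef_pos {βs βb : ℝ} (hβs : 0 < βs) (hβb : 0 < βb) {s : ℝ} (hs : 0 ≤ s) :
    0 < Ef βs βb s := by
  unfold Ef; nlinarith [mul_pos hβs hβb, sq_nonneg s]

theorem Pf_pos {βs βb : ℝ} (hβs : 0 < βs) (hβb : 0 < βb) {s : ℝ} (hs : 0 < s) :
    0 < Pf βs βb s := by
  unfold Pf; nlinarith [mul_pos hβs hβb, pow_pos hs 3, sq_nonneg s, mul_pos (mul_pos hβs hβb) hs]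

theorem hasDerivAt_Ef (βs βb s : ℝ) : HasDerivAt (Ef βs βb) (Ed βs βb s) s := by
  unfold Ef Ed
  have h := ((hasDerivAt_pow 2 s).add ((hasDerivAt_id s).const_mul (4*(βs+βb)))).add_const
      (12*(βs*βb))
  simp at h
  exact (h.add_const (12*(βs*βb))).congr_deriv (by ring)

theorem hasDerivAt_Pf (βs βb s : ℝ) : HasDerivAt (Pf βs βb) (Pd βs βb s) s := by
  unfold Pf Pd
  have h := ((hasDerivAt_pow 3 s).add ((hasDerivAt_pow 2 s).const_mul (4*(βs+βb)))).add
      ((hasDerivAt_id s).const_mul (12*(βs*βb)))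
  simp at h
  exact h.congr_deriv (by ring)

theorem hasDerivAt_Pd (βs βb s : ℝ) : HasDerivAt (Pd βs βb) (6*s+8*(βs+βb)) s := by
  unfold Pd
  have h := (((hasDerivAt_pow 2 s).const_mul (3:ℝ)).add
      (((hasDerivAt_id s).const_mul (2:ℝ)).const_mul (4*(βs+βb)))).add_const (12*(βs*βb))
  simp at h
  exact (h.add_const (12*(βs*βb))).congr_deriv (by ring)

theorem hasDerivAt_Ed (βs βb s : ℝ) : HasDerivAt (Ed βs βb) (2:ℝ) s := by
  unfold Ed
  have h := ((hasDerivAt_id s).const_mul (2:ℝ)).add_const (4*(βs+βb))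
  simpa using h

theorem hasDerivAt_lin2 (βs s : ℝ) (c : ℝ) : HasDerivAt (fun x : ℝ => c*(x+2*βs)) c s := by
  simpa using ((hasDerivAt_id s).add_const (2*βs)).const_mul c

theorem hasDerivAt_lin1 (βs βb s : ℝ) : HasDerivAt (fun x : ℝ => -2*(x+βs+βb)) (-2) s := by
  simpa using (((hasDerivAt_id s).add_const βs).add_const βb).const_mul (-2:ℝ)

theorem hasDerivAt_Af {βs βb s : ℝ} (hP : Pf βs βb s ≠ 0) :
    HasDerivAt (Af βs βb) (dAf βs βb s) s := by
  unfold Af dAf nA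
  exact ((hasDerivAt_lin1 βs βb s).div (hasDerivAt_Pf βs βb s) hP).congr_deriv (by ring)

theorem hasDerivAt_Bf {βs βb s : ℝ} (hE : Ef βs βb s ≠ 0) :
    HasDerivAt (Bf βs βb) (dBf βs βb s) s := by
  unfold Bf dBf nB
  exact ((hasDerivAt_lin2 βs s 3).div (hasDerivAt_Ef βs βb s) hE).congr_deriv (by ring)

theorem hasDerivAt_Cf {βs βb s : ℝ} (hE : Ef βs βb s ≠ 0) :
    HasDerivAt (Cf βs βb) (dCf βs βb s) s := by
  unfold Cf dCf nC
  exact ((hasDerivAt_lin2 βs s (6*βb)).div (hasDerivAt_Ef βs βb s) hE).congr_deriv (by ring)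

theorem hasDerivAt_nA (βs βb s : ℝ) : HasDerivAt (nA βs βb) (nAd βs βb s) s := by
  unfold nA nAd
  exact (((hasDerivAt_Pf βs βb s).const_mul (-2:ℝ)).sub
    ((hasDerivAt_lin1 βs βb s).mul (hasDerivAt_Pd βs βb s))).congr_deriv (by unfold Pd; ring)

theorem hasDerivAt_nB (βs βb s : ℝ) : HasDerivAt (nB βs βb) (nBd βs βb s) s := by
  unfold nB nBd
  exact (((hasDerivAt_Ef βs βb s).const_mul (3:ℝ)).sub
    ((hasDerivAt_lin2 βs s 3).mul (hasDerivAt_Ed βs βb s))).congr_deriv (by ring)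

theorem hasDerivAt_nC (βs βb s : ℝ) : HasDerivAt (nC βs βb) (nCd βs βb s) s := by
  unfold nC nCd
  exact (((hasDerivAt_Ef βs βb s).const_mul (6*βb)).sub
    ((hasDerivAt_lin2 βs s (6*βb)).mul (hasDerivAt_Ed βs βb s))).congr_deriv (by ring)

theorem hasDerivAt_dAf {βs βb s : ℝ} (hP : Pf βs βb s ≠ 0) :
    HasDerivAt (dAf βs βb) (ddAf βs βb s) s := by
  unfold dAf ddAf
  have hden := (hasDerivAt_Pf βs βb s).pow 2
  exact ((hasDerivAt_nA βs βb s).div hden (pow_ne_zero 2 hP)).congr_deriv (by push_cast; simp only [Pi.pow_apply]; ring)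

theorem hasDerivAt_dBf {βs βb s : ℝ} (hE : Ef βs βb s ≠ 0) :
    HasDerivAt (dBf βs βb) (ddBf βs βb s) s := by
  unfold dBf ddBf
  have hden := (hasDerivAt_Ef βs βb s).pow 2
  exact ((hasDerivAt_nB βs βb s).div hden (pow_ne_zero 2 hE)).congr_deriv (by push_cast; simp only [Pi.pow_apply]; ring)

theorem hasDerivAt_dCf {βs βb s : ℝ} (hE : Ef βs βb s ≠ 0) :
    HasDerivAt (dCf βs βb) (ddCf βs βb s) s := by
  unfold dCf ddCf
  have hden := (hasDerivAt_Ef βs βb s).pow 2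
  exact ((hasDerivAt_nC βs βb s).div hden (pow_ne_zero 2 hE)).congr_deriv (by push_cast; simp only [Pi.pow_apply]; ring)

theorem Dcoef_eq {βs βb : ℝ} (hβs : 0 < βs) (hβb : 0 < βb) (s : ℝ) :
    Dcoef βs βb s = Ef βs βb s / (βs*βb) := by
  unfold Dcoef lamS lamB Ef
  field_simp
  ring

theorem psiF_poly {βs βb : ℝ} (hβs : 0 < βs) (hβb : 0 < βb) (h : ℝ → ℝ → ℝ) {x t : ℝ}
    (hs : 0 < h x t) (y : ℝ) :
    psiF βs βb h x y t =
      Af βs βb (h x t) * y^3 + Bf βs βb (h x t) * y^2 + Cf βs βb (h x t) * y := by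
  have hE : Ef βs βb (h x t) ≠ 0 := (Ef_pos hβs hβb hs.le).ne'
  have hP : Pf βs βb (h x t) ≠ 0 := (Pf_pos hβs hβb hs).ne'
  have hD := Dcoef_eq hβs hβb (h x t)
  unfold psiF Phi aCoef bCoef cCoef lamS lamB
  rw [hD]
  unfold Af Bf Cf
  unfold Pf Ef at *
  field_simp
  ring

theorem phi1_eq {βs βb : ℝ} (hβs : 0 < βs) (hβb : 0 < βb) (h : ℝ → ℝ → ℝ) {x t : ℝ}
    (hs : 0 < h x t) (y : ℝ) :
    phi1 βs βb h x y t =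
      -(3*Af βs βb (h x t)*y^2 + 2*Bf βs βb (h x t)*y + Cf βs βb (h x t)) := by
  unfold phi1
  have hfun : (fun y' => psiF βs βb h x y' t)
      = fun y' => Af βs βb (h x t)*y'^3 + Bf βs βb (h x t)*y'^2 + Cf βs βb (h x t)*y' :=
    funext fun y' => psiF_poly hβs hβb h hs y'
  rw [hfun]
  have hd : HasDerivAt (fun y' : ℝ => Af βs βb (h x t)*y'^3 + Bf βs βb (h x t)*y'^2
      + Cf βs βb (h x t)*y')
      (3*Af βs βb (h x t)*y^2 + 2*Bf βs βb (h x t)*y + Cf βs βb (h x t)) y := by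
    have := (((hasDerivAt_pow 3 y).const_mul (Af βs βb (h x t))).add
      ((hasDerivAt_pow 2 y).const_mul (Bf βs βb (h x t)))).add
      ((hasDerivAt_id y).const_mul (Cf βs βb (h x t)))
    simp at this
    exact this.congr_deriv (by ring)
  rw [hd.deriv]

theorem ev_pos {h : ℝ → ℝ → ℝ} {t : ℝ} (hreg2 : ContDiff ℝ 2 fun x => h x t) {x : ℝ}
    (hs : 0 < h x t) : ∀ᶠ x' in nhds x, 0 < h x' t :=
  hreg2.continuous.continuousAt (Ioi_mem_nhds hs)

theorem hasDerivAt_h {h : ℝ → ℝ → ℝ} {t : ℝ} (hreg2 : ContDiff ℝ 2 fun x => h x t) (x : ℝ) :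
    HasDerivAt (fun x' => h x' t) (deriv (fun x' => h x' t) x) x :=
  ((hreg2.differentiable (by norm_num)) x).hasDerivAt

theorem phi2_eq {βs βb : ℝ} (hβs : 0 < βs) (hβb : 0 < βb) (h : ℝ → ℝ → ℝ) {t : ℝ}
    (hreg2 : ContDiff ℝ 2 fun x => h x t) {x : ℝ} (hs : 0 < h x t) (y : ℝ) :
    phi2 βs βb h x y t =
      (dAf βs βb (h x t)*y^3 + dBf βs βb (h x t)*y^2 + dCf βs βb (h x t)*y)
        * deriv (fun x' => h x' t) x := by
  have heq : (fun x' => psiF βs βb h x' y t) =ᶠ[nhds x]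
      (fun x' => Af βs βb (h x' t)*y^3 + Bf βs βb (h x' t)*y^2 + Cf βs βb (h x' t)*y) :=
    (ev_pos hreg2 hs).mono fun x' hx' => psiF_poly hβs hβb h hx' y
  have hh := hasDerivAt_h hreg2 x
  have hP : Pf βs βb (h x t) ≠ 0 := (Pf_pos hβs hβb hs).ne'
  have hE : Ef βs βb (h x t) ≠ 0 := (Ef_pos hβs hβb hs.le).ne'
  have hdA := (hasDerivAt_Af hP).comp x hh
  have hdB := (hasDerivAt_Bf hE).comp x hh
  have hdC := (hasDerivAt_Cf hE).comp x hh
  have hsum : HasDerivAt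
      (fun x' => Af βs βb (h x' t)*y^3 + Bf βs βb (h x' t)*y^2 + Cf βs βb (h x' t)*y)
      ((dAf βs βb (h x t)*y^3 + dBf βs βb (h x t)*y^2 + dCf βs βb (h x t)*y)
        * deriv (fun x' => h x' t) x) x := by
    have := ((hdA.mul_const (y^3)).add (hdB.mul_const (y^2))).add (hdC.mul_const y)
    exact this.congr_deriv (by ring)
  unfold phi2
  rw [(hsum.congr_of_eventuallyEq heq).deriv]

theorem deriv_y_phi1 {βs βb : ℝ} (hβs : 0 < βs) (hβb : 0 < βb) (h : ℝ → ℝ → ℝ) {x t : ℝ}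
    (hs : 0 < h x t) (y : ℝ) :
    deriv (fun y' => phi1 βs βb h x y' t) y
      = -(6*Af βs βb (h x t)*y + 2*Bf βs βb (h x t)) := by
  have hfun : (fun y' => phi1 βs βb h x y' t)
      = fun y' => -(3*Af βs βb (h x t)*y'^2 + 2*Bf βs βb (h x t)*y' + Cf βs βb (h x t)) :=
    funext fun y' => phi1_eq hβs hβb h hs y'
  rw [hfun]
  have hd : HasDerivAt (fun y' : ℝ => -(3*Af βs βb (h x t)*y'^2 + 2*Bf βs βb (h x t)*y'
      + Cf βs βb (h x t))) (-(6*Af βs βb (h x t)*y + 2*Bf βs βb (h x t))) y := by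
    have := ((((hasDerivAt_pow 2 y).const_mul (3*Af βs βb (h x t))).add
      ((hasDerivAt_id y).const_mul (2*Bf βs βb (h x t)))).add_const (Cf βs βb (h x t))).neg
    exact this.congr_deriv (by norm_num; ring)
  rw [hd.deriv]

theorem deriv_x_phi1 {βs βb : ℝ} (hβs : 0 < βs) (hβb : 0 < βb) (h : ℝ → ℝ → ℝ) {t : ℝ}
    (hreg2 : ContDiff ℝ 2 fun x => h x t) {x : ℝ} (hs : 0 < h x t) (y : ℝ) :
    deriv (fun x' => phi1 βs βb h x' y t) x
      = -((3*dAf βs βb (h x t)*y^2 + 2*dBf βs βb (h x t)*y + dCf βs βb (h x t))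
          * deriv (fun x' => h x' t) x) := by
  have heq : (fun x' => phi1 βs βb h x' y t) =ᶠ[nhds x]
      (fun x' => -(3*Af βs βb (h x' t)*y^2 + 2*Bf βs βb (h x' t)*y + Cf βs βb (h x' t))) :=
    (ev_pos hreg2 hs).mono fun x' hx' => phi1_eq hβs hβb h hx' y
  have hh := hasDerivAt_h hreg2 x
  have hP : Pf βs βb (h x t) ≠ 0 := (Pf_pos hβs hβb hs).ne'
  have hE : Ef βs βb (h x t) ≠ 0 := (Ef_pos hβs hβb hs.le).ne'
  have hdA := (hasDerivAt_Af hP).comp x hh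
  have hdB := (hasDerivAt_Bf hE).comp x hh
  have hdC := (hasDerivAt_Cf hE).comp x hh
  have hsum : HasDerivAt
      (fun x' => -(3*Af βs βb (h x' t)*y^2 + 2*Bf βs βb (h x' t)*y + Cf βs βb (h x' t)))
      (-((3*dAf βs βb (h x t)*y^2 + 2*dBf βs βb (h x t)*y + dCf βs βb (h x t))
          * deriv (fun x' => h x' t) x)) x := by
    have := ((((hdA.const_mul (3:ℝ)).mul_const (y^2)).add
      ((hdB.const_mul (2:ℝ)).mul_const y)).add hdC).neg
    exact this.congr_deriv (by ring)
  rw [(hsum.congr_of_eventuallyEq heq).deriv]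

theorem deriv_y_phi2 {βs βb : ℝ} (hβs : 0 < βs) (hβb : 0 < βb) (h : ℝ → ℝ → ℝ) {t : ℝ}
    (hreg2 : ContDiff ℝ 2 fun x => h x t) {x : ℝ} (hs : 0 < h x t) (y : ℝ) :
    deriv (fun y' => phi2 βs βb h x y' t) y
      = (3*dAf βs βb (h x t)*y^2 + 2*dBf βs βb (h x t)*y + dCf βs βb (h x t))
          * deriv (fun x' => h x' t) x := by
  have hfun : (fun y' => phi2 βs βb h x y' t)
      = fun y' => (dAf βs βb (h x t)*y'^3 + dBf βs βb (h x t)*y'^2 + dCf βs βb (h x t)*y')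
        * deriv (fun x' => h x' t) x :=
    funext fun y' => phi2_eq hβs hβb h hreg2 hs y'
  rw [hfun]
  have hd : HasDerivAt (fun y' : ℝ => (dAf βs βb (h x t)*y'^3 + dBf βs βb (h x t)*y'^2
      + dCf βs βb (h x t)*y') * deriv (fun x' => h x' t) x)
      ((3*dAf βs βb (h x t)*y^2 + 2*dBf βs βb (h x t)*y + dCf βs βb (h x t))
          * deriv (fun x' => h x' t) x) y := by
    have := ((((hasDerivAt_pow 3 y).const_mul (dAf βs βb (h x t))).add
      ((hasDerivAt_pow 2 y).const_mul (dBf βs βb (h x t)))).add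
      ((hasDerivAt_id y).const_mul (dCf βs βb (h x t)))).mul_const
        (deriv (fun x' => h x' t) x)
    simp at this
    exact this.congr_deriv (by ring)
  rw [hd.deriv]

theorem deriv_x_phi2 {βs βb : ℝ} (hβs : 0 < βs) (hβb : 0 < βb) (h : ℝ → ℝ → ℝ) {t : ℝ}
    (hreg2 : ContDiff ℝ 2 fun x => h x t) {x : ℝ} (hs : 0 < h x t) (y : ℝ) :
    deriv (fun x' => phi2 βs βb h x' y t) x
      = (ddAf βs βb (h x t)*y^3 + ddBf βs βb (h x t)*y^2 + ddCf βs βb (h x t)*y)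
          * (deriv (fun x' => h x' t) x)^2
        + (dAf βs βb (h x t)*y^3 + dBf βs βb (h x t)*y^2 + dCf βs βb (h x t)*y)
          * deriv (deriv fun x' => h x' t) x := by
  have heq : (fun x' => phi2 βs βb h x' y t) =ᶠ[nhds x]
      (fun x' => (dAf βs βb (h x' t)*y^3 + dBf βs βb (h x' t)*y^2 + dCf βs βb (h x' t)*y)
        * deriv (fun x'' => h x'' t) x') :=
    (ev_pos hreg2 hs).mono fun x' hx' => phi2_eq hβs hβb h hreg2 hx' y
  have hh := hasDerivAt_h hreg2 x
  have hP : Pf βs βb (h x t) ≠ 0 := (Pf_pos hβs hβb hs).ne'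
  have hE : Ef βs βb (h x t) ≠ 0 := (Ef_pos hβs hβb hs.le).ne'
  have hdA := (hasDerivAt_dAf hP).comp x hh
  have hdB := (hasDerivAt_dBf hE).comp x hh
  have hdC := (hasDerivAt_dCf hE).comp x hh
  have h2 : ContDiff ℝ (1+1) (fun x' => h x' t) := by exact_mod_cast hreg2
  have hg : Differentiable ℝ (deriv fun x' => h x' t) :=
    ((contDiff_succ_iff_deriv.mp h2).2.2).differentiable (by norm_num)
  have hgd : HasDerivAt (fun x' => deriv (fun x'' => h x'' t) x')
      (deriv (deriv fun x' => h x' t) x) x := (hg x).hasDerivAt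
  have hsum : HasDerivAt
      (fun x' => (dAf βs βb (h x' t)*y^3 + dBf βs βb (h x' t)*y^2 + dCf βs βb (h x' t)*y)
        * deriv (fun x'' => h x'' t) x')
      ((ddAf βs βb (h x t)*y^3 + ddBf βs βb (h x t)*y^2 + ddCf βs βb (h x t)*y)
          * (deriv (fun x' => h x' t) x)^2
        + (dAf βs βb (h x t)*y^3 + dBf βs βb (h x t)*y^2 + dCf βs βb (h x t)*y)
          * deriv (deriv fun x' => h x' t) x) x := by
    have := (((hdA.mul_const (y^3)).add (hdB.mul_const (y^2))).add (hdC.mul_const y)).mul hgd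
    simp only [Function.comp, Pi.add_apply] at this
    exact this.congr_deriv (by ring)
  rw [(hsum.congr_of_eventuallyEq heq).deriv]

theorem Pf_eq (βs βb s : ℝ) : Pf βs βb s = s * Ef βs βb s := by unfold Pf Ef; ring

theorem Af_mul {βs βb : ℝ} (hβs : 0 < βs) (hβb : 0 < βb) {s : ℝ} (hs : 0 < s) :
    Af βs βb s * s = (-2*(s+βs+βb)) / Ef βs βb s := by
  have hE := (Ef_pos hβs hβb hs.le).ne'
  unfold Af
  rw [Pf_eq]
  field_simp

theorem dAf_mul {βs βb : ℝ} (hβs : 0 < βs) (hβb : 0 < βb) {s : ℝ} (hs : 0 < s) :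
    dAf βs βb s * s^2 = nA βs βb s / (Ef βs βb s)^2 := by
  have hE := (Ef_pos hβs hβb hs.le).ne'
  unfold dAf
  rw [Pf_eq]
  field_simp

theorem ddAf_mul {βs βb : ℝ} (hβs : 0 < βs) (hβb : 0 < βb) {s : ℝ} (hs : 0 < s) :
    ddAf βs βb s * s^3
      = (nAd βs βb s * Pf βs βb s - 2 * nA βs βb s * Pd βs βb s) / (Ef βs βb s)^3 := by
  have hE := (Ef_pos hβs hβb hs.le).ne'
  unfold ddAf
  rw [Pf_eq]
  field_simp

set_option maxHeartbeats 1000000 in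
theorem test_field_divergence_free_and_gradient_bounds
    (βs βb : ℝ) (hβs : 0 < βs) (hβb : 0 < βb)
    (L T M : ℝ) (hL : 0 < L) (hT : 0 < T) (hM : 0 < M)
    (h : ℝ → ℝ → ℝ)
    (hpos : ∀ x ∈ Set.Icc (0:ℝ) L, ∀ t ∈ Set.Icc (0:ℝ) T, 0 < h x t ∧ h x t ≤ M)
    (hreg : ∀ t, ContDiff ℝ 2 fun x => h x t)
    (hdx : ∀ x ∈ Set.Icc (0:ℝ) L, ∀ t ∈ Set.Icc (0:ℝ) T,
      |deriv (fun x' => h x' t) x| ≤ M) :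
    (∀ t ∈ Set.Icc (0:ℝ) T, ∀ x ∈ Set.Icc (0:ℝ) L, ∀ y ∈ Set.Icc (0:ℝ) (h x t),
      deriv (fun x' => phi1 βs βb h x' y t) x +
        deriv (fun y' => phi2 βs βb h x y' t) y = 0) ∧
    ∃ C > 0, ∀ t ∈ Set.Icc (0:ℝ) T, ∀ x ∈ Set.Icc (0:ℝ) L, ∀ y ∈ Set.Icc (0:ℝ) (h x t),
      |deriv (fun x' => phi1 βs βb h x' y t) x| ≤ C ∧
      |deriv (fun y' => phi1 βs βb h x y' t) y| ≤ C ∧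
      |deriv (fun y' => phi2 βs βb h x y' t) y| ≤ C ∧
      |deriv (fun x' => phi2 βs βb h x' y t) x| ≤
        C * (1 + |deriv (deriv fun x' => h x' t) x|) := by
  constructor
  · intro t ht x hx y hy
    have hs : 0 < h x t := (hpos x hx t ht).1
    rw [deriv_x_phi1 hβs hβb h (hreg t) hs y, deriv_y_phi2 hβs hβb h (hreg t) hs y]
    ring
  -- bounds
  have hEne : ∀ s ∈ Set.Icc (0:ℝ) M, Ef βs βb s ≠ 0 :=
    fun s hs => (Ef_pos hβs hβb hs.1).ne'
  have cEf : Continuous (Ef βs βb) := by unfold Ef; fun_prop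
  have cg1 : ContinuousOn (fun s => (-2*(s+βs+βb)) / Ef βs βb s) (Set.Icc (0:ℝ) M) :=
    ContinuousOn.div (by fun_prop) cEf.continuousOn hEne
  have cg2 : ContinuousOn (Bf βs βb) (Set.Icc (0:ℝ) M) := by
    unfold Bf
    exact ContinuousOn.div (by fun_prop) cEf.continuousOn hEne
  have cg4 : ContinuousOn (fun s => nA βs βb s / (Ef βs βb s)^2) (Set.Icc (0:ℝ) M) :=
    ContinuousOn.div (by unfold nA Pf Pd; fun_prop) (cEf.pow 2).continuousOn
      (fun s hs => pow_ne_zero 2 (hEne s hs))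
  have cg5 : ContinuousOn (dBf βs βb) (Set.Icc (0:ℝ) M) := by
    unfold dBf
    exact ContinuousOn.div (by unfold nB Ef Ed; fun_prop) (cEf.pow 2).continuousOn
      (fun s hs => pow_ne_zero 2 (hEne s hs))
  have cg6 : ContinuousOn (dCf βs βb) (Set.Icc (0:ℝ) M) := by
    unfold dCf
    exact ContinuousOn.div (by unfold nC Ef Ed; fun_prop) (cEf.pow 2).continuousOn
      (fun s hs => pow_ne_zero 2 (hEne s hs))
  have cg7 : ContinuousOn
      (fun s => (nAd βs βb s * Pf βs βb s - 2 * nA βs βb s * Pd βs βb s) / (Ef βs βb s)^3)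
      (Set.Icc (0:ℝ) M) :=
    ContinuousOn.div (by unfold nAd nA Pf Pd; fun_prop) (cEf.pow 3).continuousOn
      (fun s hs => pow_ne_zero 3 (hEne s hs))
  have cg8 : ContinuousOn (ddBf βs βb) (Set.Icc (0:ℝ) M) := by
    unfold ddBf
    exact ContinuousOn.div (by unfold nBd nB Ef Ed; fun_prop)
      ((cEf.pow 2).pow 2).continuousOn
      (fun s hs => pow_ne_zero 2 (pow_ne_zero 2 (hEne s hs)))
  have cg9 : ContinuousOn (ddCf βs βb) (Set.Icc (0:ℝ) M) := by
    unfold ddCf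
    exact ContinuousOn.div (by unfold nCd nC Ef Ed; fun_prop)
      ((cEf.pow 2).pow 2).continuousOn
      (fun s hs => pow_ne_zero 2 (pow_ne_zero 2 (hEne s hs)))
  obtain ⟨K1, hK1⟩ := isCompact_Icc.exists_bound_of_continuousOn cg1
  obtain ⟨K2, hK2⟩ := isCompact_Icc.exists_bound_of_continuousOn cg2
  obtain ⟨K4, hK4⟩ := isCompact_Icc.exists_bound_of_continuousOn cg4
  obtain ⟨K5, hK5⟩ := isCompact_Icc.exists_bound_of_continuousOn cg5
  obtain ⟨K6, hK6⟩ := isCompact_Icc.exists_bound_of_continuousOn cg6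
  obtain ⟨K7, hK7⟩ := isCompact_Icc.exists_bound_of_continuousOn cg7
  obtain ⟨K8, hK8⟩ := isCompact_Icc.exists_bound_of_continuousOn cg8
  obtain ⟨K9, hK9⟩ := isCompact_Icc.exists_bound_of_continuousOn cg9
  have h0M : (0:ℝ) ∈ Set.Icc (0:ℝ) M := ⟨le_rfl, hM.le⟩
  have hK1n : 0 ≤ K1 := (norm_nonneg _).trans (hK1 0 h0M)
  have hK2n : 0 ≤ K2 := (norm_nonneg _).trans (hK2 0 h0M)
  have hK4n : 0 ≤ K4 := (norm_nonneg _).trans (hK4 0 h0M)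
  have hK5n : 0 ≤ K5 := (norm_nonneg _).trans (hK5 0 h0M)
  have hK6n : 0 ≤ K6 := (norm_nonneg _).trans (hK6 0 h0M)
  have hK7n : 0 ≤ K7 := (norm_nonneg _).trans (hK7 0 h0M)
  have hK8n : 0 ≤ K8 := (norm_nonneg _).trans (hK8 0 h0M)
  have hK9n : 0 ≤ K9 := (norm_nonneg _).trans (hK9 0 h0M)
  set T1 : ℝ := (3*K4 + 2*(K5*M) + K6)*M with hT1def
  set T2 : ℝ := 6*K1 + 2*K2 with hT2def
  set T3 : ℝ := (K7 + K8*M^2 + K9*M)*M^2 with hT3def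
  set T4 : ℝ := K4*M + K5*M^2 + K6*M with hT4def
  have hT1n : 0 ≤ T1 := by
    apply mul_nonneg _ hM.le
    have := mul_nonneg hK5n hM.le
    linarith
  have hT2n : 0 ≤ T2 := by linarith
  have hT3n : 0 ≤ T3 := by
    apply mul_nonneg _ (sq_nonneg M)
    have h1 := mul_nonneg hK8n (sq_nonneg M)
    have h2 := mul_nonneg hK9n hM.le
    linarith
  have hT4n : 0 ≤ T4 := by
    have h1 := mul_nonneg hK4n hM.le
    have h2 := mul_nonneg hK5n (sq_nonneg M)
    have h3 := mul_nonneg hK6n hM.le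
    linarith
  refine ⟨1 + T1 + T2 + T3 + T4, by linarith, ?_⟩
  intro t ht x hx y hy
  obtain ⟨hs0, hsM⟩ := hpos x hx t ht
  have hy0 : 0 ≤ y := hy.1
  have hys : y ≤ h x t := hy.2
  have hyM : y ≤ M := hys.trans hsM
  have hsIcc : h x t ∈ Set.Icc (0:ℝ) M := ⟨hs0.le, hsM⟩
  have hxd : |deriv (fun x' => h x' t) x| ≤ M := hdx x hx t ht
  -- primitive bounds
  have b1 : |Af βs βb (h x t) * h x t| ≤ K1 := by
    rw [Af_mul hβs hβb hs0]
    simpa only [Real.norm_eq_abs] using hK1 (h x t) hsIcc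
  have b2 : |Bf βs βb (h x t)| ≤ K2 := by
    simpa only [Real.norm_eq_abs] using hK2 (h x t) hsIcc
  have b4 : |dAf βs βb (h x t) * (h x t)^2| ≤ K4 := by
    rw [dAf_mul hβs hβb hs0]
    simpa only [Real.norm_eq_abs] using hK4 (h x t) hsIcc
  have b5 : |dBf βs βb (h x t)| ≤ K5 := by
    simpa only [Real.norm_eq_abs] using hK5 (h x t) hsIcc
  have b6 : |dCf βs βb (h x t)| ≤ K6 := by
    simpa only [Real.norm_eq_abs] using hK6 (h x t) hsIcc
  have b7 : |ddAf βs βb (h x t) * (h x t)^3| ≤ K7 := by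
    rw [ddAf_mul hβs hβb hs0]
    simpa only [Real.norm_eq_abs] using hK7 (h x t) hsIcc
  have b8 : |ddBf βs βb (h x t)| ≤ K8 := by
    simpa only [Real.norm_eq_abs] using hK8 (h x t) hsIcc
  have b9 : |ddCf βs βb (h x t)| ≤ K9 := by
    simpa only [Real.norm_eq_abs] using hK9 (h x t) hsIcc
  -- derived bounds with powers of y
  have fA : |Af βs βb (h x t)| * y ≤ K1 := by
    have e : |Af βs βb (h x t)| * h x t = |Af βs βb (h x t) * h x t| := by
      rw [abs_mul, abs_of_pos hs0]
    have := mul_le_mul_of_nonneg_left hys (abs_nonneg (Af βs βb (h x t)))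
    linarith [e ▸ b1]
  have fdA : |dAf βs βb (h x t)| * y^2 ≤ K4 := by
    have e : |dAf βs βb (h x t)| * (h x t)^2 = |dAf βs βb (h x t) * (h x t)^2| := by
      rw [abs_mul, abs_of_pos (pow_pos hs0 2)]
    have hp : y^2 ≤ (h x t)^2 := pow_le_pow_left₀ hy0 hys 2
    have := mul_le_mul_of_nonneg_left hp (abs_nonneg (dAf βs βb (h x t)))
    linarith [e ▸ b4]
  have fddA : |ddAf βs βb (h x t)| * y^3 ≤ K7 := by
    have e : |ddAf βs βb (h x t)| * (h x t)^3 = |ddAf βs βb (h x t) * (h x t)^3| := by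
      rw [abs_mul, abs_of_pos (pow_pos hs0 3)]
    have hp : y^3 ≤ (h x t)^3 := pow_le_pow_left₀ hy0 hys 3
    have := mul_le_mul_of_nonneg_left hp (abs_nonneg (ddAf βs βb (h x t)))
    linarith [e ▸ b7]
  have hy2M : y^2 ≤ M^2 := pow_le_pow_left₀ hy0 hyM 2
  -- bound on the common quadratic factor
  have hQ : |3*dAf βs βb (h x t)*y^2 + 2*dBf βs βb (h x t)*y + dCf βs βb (h x t)|
      ≤ 3*K4 + 2*(K5*M) + K6 := by
    have t1 : |3*dAf βs βb (h x t)*y^2| ≤ 3*K4 := by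
      rw [show 3*dAf βs βb (h x t)*y^2 = 3*(dAf βs βb (h x t)*y^2) by ring, abs_mul,
        abs_mul, abs_of_nonneg (sq_nonneg y), abs_of_nonneg (by norm_num : (0:ℝ) ≤ 3)]
      linarith
    have t2 : |2*dBf βs βb (h x t)*y| ≤ 2*(K5*M) := by
      rw [show 2*dBf βs βb (h x t)*y = 2*(dBf βs βb (h x t)*y) by ring, abs_mul,
        abs_mul, abs_of_nonneg hy0, abs_of_nonneg (by norm_num : (0:ℝ) ≤ 2)]
      have := mul_le_mul b5 hyM hy0 hK5n
      linarith
    calc |3*dAf βs βb (h x t)*y^2 + 2*dBf βs βb (h x t)*y + dCf βs βb (h x t)|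
        ≤ |3*dAf βs βb (h x t)*y^2| + |2*dBf βs βb (h x t)*y| + |dCf βs βb (h x t)| :=
          abs_add_three _ _ _
      _ ≤ 3*K4 + 2*(K5*M) + K6 := by linarith
  refine ⟨?_, ?_, ?_, ?_⟩
  · rw [deriv_x_phi1 hβs hβb h (hreg t) hs0 y, abs_neg, abs_mul]
    have := mul_le_mul hQ hxd (abs_nonneg _) (by linarith [mul_nonneg hK5n hM.le])
    rw [hT1def]
    linarith
  · rw [deriv_y_phi1 hβs hβb h hs0 y, abs_neg]
    have t1 : |6*Af βs βb (h x t)*y| ≤ 6*K1 := by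
      rw [show 6*Af βs βb (h x t)*y = 6*(Af βs βb (h x t)*y) by ring, abs_mul,
        abs_mul, abs_of_nonneg hy0, abs_of_nonneg (by norm_num : (0:ℝ) ≤ 6)]
      linarith
    have t2 : |2*Bf βs βb (h x t)| ≤ 2*K2 := by
      rw [abs_mul, abs_of_nonneg (by norm_num : (0:ℝ) ≤ 2)]
      linarith
    calc |6*Af βs βb (h x t)*y + 2*Bf βs βb (h x t)|
        ≤ |6*Af βs βb (h x t)*y| + |2*Bf βs βb (h x t)| := abs_add_le _ _
      _ ≤ 1 + T1 + T2 + T3 + T4 := by rw [hT2def]; linarith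
  · rw [deriv_y_phi2 hβs hβb h (hreg t) hs0 y, abs_mul]
    have := mul_le_mul hQ hxd (abs_nonneg _) (by linarith [mul_nonneg hK5n hM.le])
    rw [hT1def]
    linarith
  · rw [deriv_x_phi2 hβs hβb h (hreg t) hs0 y]
    have hQ1 : |ddAf βs βb (h x t)*y^3 + ddBf βs βb (h x t)*y^2 + ddCf βs βb (h x t)*y|
        ≤ K7 + K8*M^2 + K9*M := by
      have t1 : |ddAf βs βb (h x t)*y^3| ≤ K7 := by
        rw [abs_mul, abs_of_nonneg (pow_nonneg hy0 3)]
        linarith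
      have t2 : |ddBf βs βb (h x t)*y^2| ≤ K8*M^2 := by
        rw [abs_mul, abs_of_nonneg (sq_nonneg y)]
        exact mul_le_mul b8 hy2M (sq_nonneg y) hK8n
      have t3 : |ddCf βs βb (h x t)*y| ≤ K9*M := by
        rw [abs_mul, abs_of_nonneg hy0]
        exact mul_le_mul b9 hyM hy0 hK9n
      calc |ddAf βs βb (h x t)*y^3 + ddBf βs βb (h x t)*y^2 + ddCf βs βb (h x t)*y|
          ≤ |ddAf βs βb (h x t)*y^3| + |ddBf βs βb (h x t)*y^2| + |ddCf βs βb (h x t)*y| :=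
            abs_add_three _ _ _
        _ ≤ K7 + K8*M^2 + K9*M := by linarith
    have hQ2 : |dAf βs βb (h x t)*y^3 + dBf βs βb (h x t)*y^2 + dCf βs βb (h x t)*y|
        ≤ T4 := by
      have t1 : |dAf βs βb (h x t)*y^3| ≤ K4*M := by
        rw [abs_mul, abs_of_nonneg (pow_nonneg hy0 3),
          show y^3 = y^2*y by ring, ← mul_assoc]
        exact mul_le_mul fdA hyM hy0 hK4n
      have t2 : |dBf βs βb (h x t)*y^2| ≤ K5*M^2 := by
        rw [abs_mul, abs_of_nonneg (sq_nonneg y)]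
        exact mul_le_mul b5 hy2M (sq_nonneg y) hK5n
      have t3 : |dCf βs βb (h x t)*y| ≤ K6*M := by
        rw [abs_mul, abs_of_nonneg hy0]
        exact mul_le_mul b6 hyM hy0 hK6n
      calc |dAf βs βb (h x t)*y^3 + dBf βs βb (h x t)*y^2 + dCf βs βb (h x t)*y|
          ≤ |dAf βs βb (h x t)*y^3| + |dBf βs βb (h x t)*y^2| + |dCf βs βb (h x t)*y| :=
            abs_add_three _ _ _
        _ ≤ T4 := by rw [hT4def]; linarith
    have hd2 : |(deriv (fun x' => h x' t) x)^2| ≤ M^2 := by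
      rw [abs_pow]
      exact pow_le_pow_left₀ (abs_nonneg _) hxd 2
    have e1 : |(ddAf βs βb (h x t)*y^3 + ddBf βs βb (h x t)*y^2 + ddCf βs βb (h x t)*y)
        * (deriv (fun x' => h x' t) x)^2| ≤ T3 := by
      rw [abs_mul, hT3def]
      have hn : 0 ≤ K7 + K8*M^2 + K9*M := by
        have h1 := mul_nonneg hK8n (sq_nonneg M)
        have h2 := mul_nonneg hK9n hM.le
        linarith
      exact mul_le_mul hQ1 hd2 (abs_nonneg _) hn
    have e2 : |(dAf βs βb (h x t)*y^3 + dBf βs βb (h x t)*y^2 + dCf βs βb (h x t)*y)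
        * deriv (deriv fun x' => h x' t) x| ≤ T4 * |deriv (deriv fun x' => h x' t) x| := by
      rw [abs_mul]
      exact mul_le_mul_of_nonneg_right hQ2 (abs_nonneg _)
    have habs : (0:ℝ) ≤ |deriv (deriv fun x' => h x' t) x| := abs_nonneg _
    calc |(ddAf βs βb (h x t)*y^3 + ddBf βs βb (h x t)*y^2 + ddCf βs βb (h x t)*y)
          * (deriv (fun x' => h x' t) x)^2
        + (dAf βs βb (h x t)*y^3 + dBf βs βb (h x t)*y^2 + dCf βs βb (h x t)*y)
          * deriv (deriv fun x' => h x' t) x|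
        ≤ |(ddAf βs βb (h x t)*y^3 + ddBf βs βb (h x t)*y^2 + ddCf βs βb (h x t)*y)
          * (deriv (fun x' => h x' t) x)^2|
        + |(dAf βs βb (h x t)*y^3 + dBf βs βb (h x t)*y^2 + dCf βs βb (h x t)*y)
          * deriv (deriv fun x' => h x' t) x| := abs_add_le _ _
      _ ≤ T3 + T4 * |deriv (deriv fun x' => h x' t) x| := by linarith
      _ ≤ (1 + T1 + T2 + T3 + T4) * (1 + |deriv (deriv fun x' => h x' t) x|) := by
          nlinarith [mul_nonneg hT1n habs, mul_nonneg hT2n habs, mul_nonneg hT3n habs,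
            mul_nonneg hT4n habs, habs]
end

section
/- Suppose h is twice continuously differentiable in (x,t) with |∂_x h(x,t)| ≤ M for all (x,t). Then there exists a constant C > 0, depending only on β_s, β_b and M, such that for all t ∈ [0,T], x ∈ [0,L] and 0 ≤ y ≤ h(x,t) one has |∂_t φ₁(x,y,t)| ≤ C·(1 + |∂_t h(x,t)|) and |∂_t φ₂(x,y,t)| ≤ C·( |∂_t h(x,t)|·(|∂_t h(x,t)| + |∂_x∂_t h(x,t)|) + |∂_t h(x,t)| + |∂_x∂_t h(x,t)| ). -/
set_option maxHeartbeats 1000000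

namespace TFD


noncomputable def qf (βs βb s : ℝ) : ℝ := 12 + (4/βs + 4/βb)*s + (1/(βs*βb))*s^2
noncomputable def dqf (βs βb s : ℝ) : ℝ := (4/βs + 4/βb) + 2*(1/(βs*βb))*s
noncomputable def maf (βs βb s : ℝ) : ℝ := -2*(1/βs + 1/βb) + (-2*(1/(βs*βb)))*s
noncomputable def mbf (βs βb s : ℝ) : ℝ := 6/βb + (3*(1/(βs*βb)))*s
noncomputable def ncf (βs βb s : ℝ) : ℝ := 12 + (6/βs)*s
noncomputable def Xa (βs βb s : ℝ) : ℝ :=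
  (-2*(1/(βs*βb)))*(qf βs βb s*s) - maf βs βb s*(dqf βs βb s*s + qf βs βb s)
noncomputable def Xb (βs βb s : ℝ) : ℝ := (3*(1/(βs*βb)))*qf βs βb s - mbf βs βb s*dqf βs βb s
noncomputable def Xc (βs βb s : ℝ) : ℝ := (6/βs)*qf βs βb s - ncf βs βb s*dqf βs βb s
noncomputable def dXa (βs βb s : ℝ) : ℝ := -(maf βs βb s)*(2*(1/(βs*βb))*s + 2*dqf βs βb s)
noncomputable def dXb (βs βb s : ℝ) : ℝ := -2*(1/(βs*βb))*mbf βs βb s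
noncomputable def dXc (βs βb s : ℝ) : ℝ := -2*(1/(βs*βb))*ncf βs βb s

variable {βs βb : ℝ}

lemma Dcoef_eq (hβs : βs ≠ 0) (hβb : βb ≠ 0) (s : ℝ) : Dcoef βs βb s = qf βs βb s := by
  unfold Dcoef qf lamS lamB; field_simp; ring

lemma aCoef_eq (hβs : βs ≠ 0) (hβb : βb ≠ 0) (s : ℝ) :
    aCoef βs βb s = s * maf βs βb s / qf βs βb s := by
  rw [aCoef, Dcoef_eq hβs hβb]
  congr 1
  unfold lamS lamB maf; field_simp; ring

lemma bCoef_eq (hβs : βs ≠ 0) (hβb : βb ≠ 0) (s : ℝ) :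
    bCoef βs βb s = s * mbf βs βb s / qf βs βb s := by
  rw [bCoef, Dcoef_eq hβs hβb]
  congr 1
  unfold lamS lamB mbf; field_simp; ring

lemma cCoef_eq (hβs : βs ≠ 0) (hβb : βb ≠ 0) (s : ℝ) :
    cCoef βs βb s = ncf βs βb s / qf βs βb s := by
  rw [cCoef, Dcoef_eq hβs hβb]
  congr 1
  unfold lamS ncf; field_simp; ring

lemma qf_ge (hβs : 0 < βs) (hβb : 0 < βb) {s : ℝ} (hs : 0 ≤ s) : 12 ≤ qf βs βb s := by
  unfold qf
  have h1 : 0 ≤ (4/βs + 4/βb)*s := mul_nonneg (by positivity) hs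
  have h2 : 0 ≤ (1/(βs*βb))*s^2 := by positivity
  linarith

lemma qf_pos (hβs : 0 < βs) (hβb : 0 < βb) {s : ℝ} (hs : 0 ≤ s) : 0 < qf βs βb s :=
  lt_of_lt_of_le (by norm_num) (qf_ge hβs hβb hs)

lemma hasDerivAt_qf (βs βb s : ℝ) : HasDerivAt (qf βs βb) (dqf βs βb s) s := by
  have h1 := (hasDerivAt_id s).const_mul (4/βs + 4/βb)
  have h2 := (hasDerivAt_pow 2 s).const_mul (1/(βs*βb))
  have := ((hasDerivAt_const s (12:ℝ)).add h1).add h2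
  refine this.congr_deriv ?_
  unfold dqf; push_cast; ring

lemma hasDerivAt_dqf (βs βb s : ℝ) : HasDerivAt (dqf βs βb) (2*(1/(βs*βb))) s := by
  have h1 := (hasDerivAt_id s).const_mul (2*(1/(βs*βb)))
  have := (hasDerivAt_const s ((4:ℝ)/βs + 4/βb)).add h1
  refine this.congr_deriv ?_
  ring

lemma hasDerivAt_maf (βs βb s : ℝ) : HasDerivAt (maf βs βb) (-2*(1/(βs*βb))) s := by
  have h1 := (hasDerivAt_id s).const_mul (-2*(1/(βs*βb)))
  have := (hasDerivAt_const s (-2*((1:ℝ)/βs + 1/βb))).add h1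
  refine this.congr_deriv ?_
  ring

lemma hasDerivAt_mbf (βs βb s : ℝ) : HasDerivAt (mbf βs βb) (3*(1/(βs*βb))) s := by
  have h1 := (hasDerivAt_id s).const_mul (3*(1/(βs*βb)))
  have := (hasDerivAt_const s ((6:ℝ)/βb)).add h1
  refine this.congr_deriv ?_
  ring

lemma hasDerivAt_ncf (βs βb s : ℝ) : HasDerivAt (ncf βs βb) (6/βs) s := by
  have h1 := (hasDerivAt_id s).const_mul (6/βs)
  have := (hasDerivAt_const s (12:ℝ)).add h1
  refine this.congr_deriv ?_
  ring

lemma hasDerivAt_Xa (βs βb s : ℝ) : HasDerivAt (Xa βs βb) (dXa βs βb s) s := by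
  have h1 := ((hasDerivAt_qf βs βb s).mul (hasDerivAt_id s)).const_mul
    (-2*(1/(βs*βb)))
  have h2 := (hasDerivAt_maf βs βb s).mul
    (((hasDerivAt_dqf βs βb s).mul (hasDerivAt_id s)).add (hasDerivAt_qf βs βb s))
  have := h1.sub h2
  refine this.congr_deriv ?_
  unfold dXa; simp only [Pi.add_apply, Pi.sub_apply, Pi.mul_apply, Pi.div_apply, Pi.pow_apply, Pi.neg_apply, id_eq, id]; ring

lemma hasDerivAt_Xb (βs βb s : ℝ) : HasDerivAt (Xb βs βb) (dXb βs βb s) s := by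
  have h1 := (hasDerivAt_qf βs βb s).const_mul (3*(1/(βs*βb)))
  have h2 := (hasDerivAt_mbf βs βb s).mul (hasDerivAt_dqf βs βb s)
  have := h1.sub h2
  refine this.congr_deriv ?_
  unfold dXb dqf mbf; ring

lemma hasDerivAt_Xc (βs βb s : ℝ) : HasDerivAt (Xc βs βb) (dXc βs βb s) s := by
  have h1 := (hasDerivAt_qf βs βb s).const_mul (6/βs)
  have h2 := (hasDerivAt_ncf βs βb s).mul (hasDerivAt_dqf βs βb s)
  have := h1.sub h2
  refine this.congr_deriv ?_
  unfold dXc dqf ncf; ring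



noncomputable def Gfun (βs βb y s : ℝ) : ℝ :=
  -(3*aCoef βs βb s*y^2/s^2 + 2*bCoef βs βb s*y/s + cCoef βs βb s)
noncomputable def Gd (βs βb y s : ℝ) : ℝ :=
  -(3*y^2*Xa βs βb s/(qf βs βb s*s)^2 + 2*y*Xb βs βb s/(qf βs βb s)^2
    + Xc βs βb s/(qf βs βb s)^2)
noncomputable def Wfun (βs βb y s : ℝ) : ℝ :=
  aCoef βs βb s*y^3/s^2 + bCoef βs βb s*y^2/s + cCoef βs βb s*y
noncomputable def W1f (βs βb y s : ℝ) : ℝ :=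
  y^3*Xa βs βb s/(qf βs βb s*s)^2 + y^2*Xb βs βb s/(qf βs βb s)^2
    + y*Xc βs βb s/(qf βs βb s)^2
noncomputable def W2f (βs βb y s : ℝ) : ℝ :=
  (y^3*dXa βs βb s*(qf βs βb s*s)^2
    - y^3*Xa βs βb s*(2*(qf βs βb s*s)*(dqf βs βb s*s + qf βs βb s)))/((qf βs βb s*s)^2)^2
  + (y^2*dXb βs βb s*(qf βs βb s)^2
    - y^2*Xb βs βb s*(2*qf βs βb s*dqf βs βb s))/((qf βs βb s)^2)^2
  + (y*dXc βs βb s*(qf βs βb s)^2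
    - y*Xc βs βb s*(2*qf βs βb s*dqf βs βb s))/((qf βs βb s)^2)^2

variable {βs βb : ℝ}

lemma hasDerivAt_Gfun (hβs : 0 < βs) (hβb : 0 < βb) (y : ℝ) {s : ℝ} (hs : 0 < s) :
    HasDerivAt (Gfun βs βb y) (Gd βs βb y s) s := by
  have hq0 : qf βs βb s ≠ 0 := (qf_pos hβs hβb hs.le).ne'
  have hqs : qf βs βb s * s ≠ 0 := mul_ne_zero hq0 hs.ne'
  have t1 := ((hasDerivAt_maf βs βb s).div
    ((hasDerivAt_qf βs βb s).mul (hasDerivAt_id' (x := s))) hqs).const_mul (3*y^2)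
  have t2 := ((hasDerivAt_mbf βs βb s).div (hasDerivAt_qf βs βb s) hq0).const_mul (2*y)
  have t3 := (hasDerivAt_ncf βs βb s).div (hasDerivAt_qf βs βb s) hq0
  have H := ((t1.add t2).add t3).neg
  have hev : Gfun βs βb y =ᶠ[nhds s]
      (fun s' => -((3*y^2*(maf βs βb s'/(qf βs βb s'*s')) + 2*y*(mbf βs βb s'/qf βs βb s'))
        + ncf βs βb s'/qf βs βb s')) := by
    filter_upwards [eventually_gt_nhds hs] with s' hs'
    have hq0' : qf βs βb s' ≠ 0 := (qf_pos hβs hβb hs'.le).ne'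
    unfold Gfun
    rw [aCoef_eq hβs.ne' hβb.ne', bCoef_eq hβs.ne' hβb.ne', cCoef_eq hβs.ne' hβb.ne']
    field_simp
  have H2 := H.congr_of_eventuallyEq hev
  refine H2.congr_deriv ?_
  unfold Gd Xa Xb Xc
  simp only [Pi.add_apply, Pi.sub_apply, Pi.mul_apply, Pi.div_apply, Pi.pow_apply, Pi.neg_apply, id_eq, id]
  ring

lemma hasDerivAt_Wfun (hβs : 0 < βs) (hβb : 0 < βb) (y : ℝ) {s : ℝ} (hs : 0 < s) :
    HasDerivAt (Wfun βs βb y) (W1f βs βb y s) s := by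
  have hq0 : qf βs βb s ≠ 0 := (qf_pos hβs hβb hs.le).ne'
  have hqs : qf βs βb s * s ≠ 0 := mul_ne_zero hq0 hs.ne'
  have t1 := ((hasDerivAt_maf βs βb s).div
    ((hasDerivAt_qf βs βb s).mul (hasDerivAt_id' (x := s))) hqs).const_mul (y^3)
  have t2 := ((hasDerivAt_mbf βs βb s).div (hasDerivAt_qf βs βb s) hq0).const_mul (y^2)
  have t3 := ((hasDerivAt_ncf βs βb s).div (hasDerivAt_qf βs βb s) hq0).const_mul y
  have H := (t1.add t2).add t3
  have hev : Wfun βs βb y =ᶠ[nhds s]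
      (fun s' => (y^3*(maf βs βb s'/(qf βs βb s'*s')) + y^2*(mbf βs βb s'/qf βs βb s'))
        + y*(ncf βs βb s'/qf βs βb s')) := by
    filter_upwards [eventually_gt_nhds hs] with s' hs'
    have hq0' : qf βs βb s' ≠ 0 := (qf_pos hβs hβb hs'.le).ne'
    unfold Wfun
    rw [aCoef_eq hβs.ne' hβb.ne', bCoef_eq hβs.ne' hβb.ne', cCoef_eq hβs.ne' hβb.ne']
    field_simp
  have H2 := H.congr_of_eventuallyEq hev
  refine H2.congr_deriv ?_
  unfold W1f Xa Xb Xc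
  simp only [Pi.add_apply, Pi.sub_apply, Pi.mul_apply, Pi.div_apply, Pi.pow_apply, Pi.neg_apply, id_eq, id]
  ring

lemma hasDerivAt_W1f (hβs : 0 < βs) (hβb : 0 < βb) (y : ℝ) {s : ℝ} (hs : 0 < s) :
    HasDerivAt (fun s' => W1f βs βb y s') (W2f βs βb y s) s := by
  have hq0 : qf βs βb s ≠ 0 := (qf_pos hβs hβb hs.le).ne'
  have hqs : (qf βs βb s * s)^2 ≠ 0 := pow_ne_zero _ (mul_ne_zero hq0 hs.ne')
  have hq2 : (qf βs βb s)^2 ≠ 0 := pow_ne_zero _ hq0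
  have t1 := ((hasDerivAt_Xa βs βb s).const_mul (y^3)).div
    (((hasDerivAt_qf βs βb s).mul (hasDerivAt_id' (x := s))).pow 2) hqs
  have t2 := ((hasDerivAt_Xb βs βb s).const_mul (y^2)).div
    ((hasDerivAt_qf βs βb s).pow 2) hq2
  have t3 := ((hasDerivAt_Xc βs βb s).const_mul y).div
    ((hasDerivAt_qf βs βb s).pow 2) hq2
  have H := (t1.add t2).add t3
  refine H.congr_deriv ?_
  unfold W2f
  push_cast
  simp only [Pi.add_apply, Pi.sub_apply, Pi.mul_apply, Pi.div_apply, Pi.pow_apply, Pi.neg_apply, id_eq, id]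
  ring



lemma psiF_eq (βs βb : ℝ) (h : ℝ → ℝ → ℝ) (x y t : ℝ) (hs : h x t ≠ 0) :
    psiF βs βb h x y t = Wfun βs βb y (h x t) := by
  unfold psiF Phi Wfun
  field_simp

lemma phi1_eq (βs βb : ℝ) (h : ℝ → ℝ → ℝ) (x y t : ℝ) (hs : h x t ≠ 0) :
    phi1 βs βb h x y t = Gfun βs βb y (h x t) := by
  unfold phi1
  have hfun : (fun y' => psiF βs βb h x y' t)
      = fun y' => aCoef βs βb (h x t)*y'^3/(h x t)^2 + bCoef βs βb (h x t)*y'^2/(h x t)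
        + cCoef βs βb (h x t)*y' := by
    funext y'
    rw [psiF_eq βs βb h x y' t hs]
    rfl
  rw [hfun]
  have d1 := ((hasDerivAt_pow 3 y).const_mul (aCoef βs βb (h x t))).div_const ((h x t)^2)
  have d2 := ((hasDerivAt_pow 2 y).const_mul (bCoef βs βb (h x t))).div_const (h x t)
  have d3 := (hasDerivAt_id' (x := y)).const_mul (cCoef βs βb (h x t))
  have H := (d1.add d2).add d3
  rw [show deriv (fun y' => aCoef βs βb (h x t)*y'^3/(h x t)^2 + bCoef βs βb (h x t)*y'^2/(h x t)
        + cCoef βs βb (h x t)*y') y = _ from H.deriv]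
  unfold Gfun
  push_cast
  ring

variable {βs βb : ℝ}

lemma Gd_bound (hβs : 0 < βs) (hβb : 0 < βb) {M K s y : ℝ} (hK : 1 ≤ K) (hM : 0 < M)
    (hs : 0 < s) (hsM : s ≤ M) (hy : 0 ≤ y) (hys : y ≤ s)
    (h1 : |Xa βs βb s| ≤ K) (h2 : |Xb βs βb s| ≤ K) (h3 : |Xc βs βb s| ≤ K) :
    |Gd βs βb y s| ≤ 6*K*(1+M) := by
  have hq := qf_ge hβs hβb hs.le
  have hq0 : (0:ℝ) < qf βs βb s := by linarith
  have hu0 : 0 ≤ y/s := div_nonneg hy hs.le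
  have hu1 : y/s ≤ 1 := (div_le_one hs).mpr hys
  have hyM : y ≤ M := le_trans hys hsM
  have hid : Gd βs βb y s
      = -((3*(y/s)^2*Xa βs βb s + 2*y*Xb βs βb s + Xc βs βb s)/(qf βs βb s)^2) := by
    unfold Gd; field_simp
  rw [hid, abs_neg, abs_div, abs_of_pos (by positivity : (0:ℝ) < (qf βs βb s)^2)]
  have e1 : |3*(y/s)^2*Xa βs βb s| ≤ 3*K := by
    rw [abs_mul, abs_of_nonneg (by positivity : (0:ℝ) ≤ 3*(y/s)^2)]
    calc 3*(y/s)^2*|Xa βs βb s| ≤ 3*1^2*K := by gcongr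
    _ = 3*K := by ring
  have e2 : |2*y*Xb βs βb s| ≤ 2*M*K := by
    rw [abs_mul, abs_of_nonneg (by positivity : (0:ℝ) ≤ 2*y)]
    gcongr
  have e3 := h3
  have hnum : |3*(y/s)^2*Xa βs βb s + 2*y*Xb βs βb s + Xc βs βb s| ≤ 3*K + 2*M*K + K :=
    le_trans (abs_add_three _ _ _) (by linarith)
  have hq1 : (1:ℝ) ≤ (qf βs βb s)^2 := by nlinarith
  calc |3*(y/s)^2*Xa βs βb s + 2*y*Xb βs βb s + Xc βs βb s| / (qf βs βb s)^2
      ≤ |3*(y/s)^2*Xa βs βb s + 2*y*Xb βs βb s + Xc βs βb s| := div_le_self (abs_nonneg _) hq1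
    _ ≤ 3*K + 2*M*K + K := hnum
    _ ≤ 6*K*(1+M) := by nlinarith

lemma W1f_bound (hβs : 0 < βs) (hβb : 0 < βb) {M K s y : ℝ} (hK : 1 ≤ K) (hM : 0 < M)
    (hs : 0 < s) (hsM : s ≤ M) (hy : 0 ≤ y) (hys : y ≤ s)
    (h1 : |Xa βs βb s| ≤ K) (h2 : |Xb βs βb s| ≤ K) (h3 : |Xc βs βb s| ≤ K) :
    |W1f βs βb y s| ≤ 3*K*(1+M)^2 := by
  have hq := qf_ge hβs hβb hs.le
  have hq0 : (0:ℝ) < qf βs βb s := by linarith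
  have hu0 : 0 ≤ y/s := div_nonneg hy hs.le
  have hu1 : y/s ≤ 1 := (div_le_one hs).mpr hys
  have hyM : y ≤ M := le_trans hys hsM
  have hid : W1f βs βb y s
      = ((y/s)^2*y*Xa βs βb s + y^2*Xb βs βb s + y*Xc βs βb s)/(qf βs βb s)^2 := by
    unfold W1f; field_simp
  rw [hid, abs_div, abs_of_pos (by positivity : (0:ℝ) < (qf βs βb s)^2)]
  have e1 : |(y/s)^2*y*Xa βs βb s| ≤ M*K := by
    rw [abs_mul, abs_of_nonneg (by positivity : (0:ℝ) ≤ (y/s)^2*y)]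
    calc (y/s)^2*y*|Xa βs βb s| ≤ 1^2*M*K := by gcongr
    _ = M*K := by ring
  have e2 : |y^2*Xb βs βb s| ≤ M^2*K := by
    rw [abs_mul, abs_of_nonneg (by positivity : (0:ℝ) ≤ y^2)]
    gcongr
  have e3 : |y*Xc βs βb s| ≤ M*K := by
    rw [abs_mul, abs_of_nonneg hy]
    gcongr
  have hnum := le_trans (abs_add_three ((y/s)^2*y*Xa βs βb s) (y^2*Xb βs βb s) (y*Xc βs βb s))
    (by linarith : |(y/s)^2*y*Xa βs βb s| + |y^2*Xb βs βb s| + |y*Xc βs βb s| ≤ M*K + M^2*K + M*K)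
  have hq1 : (1:ℝ) ≤ (qf βs βb s)^2 := by nlinarith
  calc |(y/s)^2*y*Xa βs βb s + y^2*Xb βs βb s + y*Xc βs βb s| / (qf βs βb s)^2
      ≤ |(y/s)^2*y*Xa βs βb s + y^2*Xb βs βb s + y*Xc βs βb s| := div_le_self (abs_nonneg _) hq1
    _ ≤ M*K + M^2*K + M*K := hnum
    _ ≤ 3*K*(1+M)^2 := by nlinarith

lemma W2f_bound (hβs : 0 < βs) (hβb : 0 < βb) {M K s y : ℝ} (hK : 1 ≤ K) (hM : 0 < M)
    (hs : 0 < s) (hsM : s ≤ M) (hy : 0 ≤ y) (hys : y ≤ s)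
    (h1 : |Xa βs βb s| ≤ K) (h2 : |Xb βs βb s| ≤ K) (h3 : |Xc βs βb s| ≤ K)
    (h4 : |dXa βs βb s| ≤ K) (h5 : |dXb βs βb s| ≤ K) (h6 : |dXc βs βb s| ≤ K)
    (h7 : |qf βs βb s| ≤ K) (h8 : |dqf βs βb s| ≤ K) :
    |W2f βs βb y s| ≤ 6*K^3*(1+M)^2 := by
  have hq := qf_ge hβs hβb hs.le
  have hq0 : (0:ℝ) < qf βs βb s := by linarith
  have hu0 : 0 ≤ y/s := div_nonneg hy hs.le
  have hu1 : y/s ≤ 1 := (div_le_one hs).mpr hys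
  have hyM : y ≤ M := le_trans hys hsM
  set Q := qf βs βb s
  set dQ := dqf βs βb s
  have hid : W2f βs βb y s
      = ((y/s)^3*(Q^2*s*dXa βs βb s - 2*Xa βs βb s*Q*dQ*s - 2*Xa βs βb s*Q^2)
        + y^2*(dXb βs βb s*Q^2 - 2*Xb βs βb s*Q*dQ)
        + y*(dXc βs βb s*Q^2 - 2*Xc βs βb s*Q*dQ))/Q^4 := by
    have hq0' : qf βs βb s ≠ 0 := hq0.ne'
    unfold W2f; simp only [Q, dQ]; field_simp; ring
  rw [hid, abs_div, abs_of_pos (by positivity : (0:ℝ) < Q^4)]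
  have f1 : |Q^2*s*dXa βs βb s| ≤ K^2*M*K := by
    rw [abs_mul, abs_mul, abs_pow, abs_of_pos hs]
    gcongr
  have f2 : |2*Xa βs βb s*Q*dQ*s| ≤ 2*K*K*K*M := by
    rw [abs_mul, abs_mul, abs_mul, abs_mul, abs_of_pos hs]
    have : |(2:ℝ)| = 2 := by norm_num
    rw [this]
    gcongr
  have f3 : |2*Xa βs βb s*Q^2| ≤ 2*K*K^2 := by
    rw [abs_mul, abs_mul, abs_pow]
    have : |(2:ℝ)| = 2 := by norm_num
    rw [this]
    gcongr
  have g1 : |(y/s)^3*(Q^2*s*dXa βs βb s - 2*Xa βs βb s*Q*dQ*s - 2*Xa βs βb s*Q^2)|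
      ≤ K^2*M*K + 2*K*K*K*M + 2*K*K^2 := by
    rw [abs_mul, abs_pow, abs_of_nonneg hu0]
    calc (y/s)^3 * |Q^2*s*dXa βs βb s - 2*Xa βs βb s*Q*dQ*s - 2*Xa βs βb s*Q^2|
        ≤ 1^3 * (|Q^2*s*dXa βs βb s| + |2*Xa βs βb s*Q*dQ*s| + |2*Xa βs βb s*Q^2|) := by
          gcongr
          exact le_trans (abs_sub _ _) (by linarith [abs_sub (Q^2*s*dXa βs βb s) (2*Xa βs βb s*Q*dQ*s)])
      _ ≤ K^2*M*K + 2*K*K*K*M + 2*K*K^2 := by rw [one_pow, one_mul]; linarith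
  have g2 : |y^2*(dXb βs βb s*Q^2 - 2*Xb βs βb s*Q*dQ)| ≤ M^2*(K*K^2 + 2*K*K*K) := by
    rw [abs_mul, abs_pow]
    have e1 : |dXb βs βb s*Q^2| ≤ K*K^2 := by rw [abs_mul, abs_pow]; gcongr
    have e2 : |2*Xb βs βb s*Q*dQ| ≤ 2*K*K*K := by
      rw [abs_mul, abs_mul, abs_mul]
      have : |(2:ℝ)| = 2 := by norm_num
      rw [this]; gcongr
    have e3 : |dXb βs βb s*Q^2 - 2*Xb βs βb s*Q*dQ| ≤ K*K^2 + 2*K*K*K :=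
      le_trans (abs_sub _ _) (by linarith)
    exact mul_le_mul (by rw [abs_of_nonneg hy]; nlinarith : |y|^2 ≤ M^2) e3
      (abs_nonneg _) (by positivity)
  have g3 : |y*(dXc βs βb s*Q^2 - 2*Xc βs βb s*Q*dQ)| ≤ M*(K*K^2 + 2*K*K*K) := by
    rw [abs_mul]
    have e1 : |dXc βs βb s*Q^2| ≤ K*K^2 := by rw [abs_mul, abs_pow]; gcongr
    have e2 : |2*Xc βs βb s*Q*dQ| ≤ 2*K*K*K := by
      rw [abs_mul, abs_mul, abs_mul]
      have : |(2:ℝ)| = 2 := by norm_num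
      rw [this]; gcongr
    have e3 : |dXc βs βb s*Q^2 - 2*Xc βs βb s*Q*dQ| ≤ K*K^2 + 2*K*K*K :=
      le_trans (abs_sub _ _) (by linarith)
    exact mul_le_mul (by rw [abs_of_nonneg hy]; exact hyM) e3 (abs_nonneg _) hM.le
  have hnum : |(y/s)^3*(Q^2*s*dXa βs βb s - 2*Xa βs βb s*Q*dQ*s - 2*Xa βs βb s*Q^2)
      + y^2*(dXb βs βb s*Q^2 - 2*Xb βs βb s*Q*dQ)
      + y*(dXc βs βb s*Q^2 - 2*Xc βs βb s*Q*dQ)|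
      ≤ (K^2*M*K + 2*K*K*K*M + 2*K*K^2) + M^2*(K*K^2 + 2*K*K*K) + M*(K*K^2 + 2*K*K*K) := by
    refine le_trans (abs_add_three _ _ _) ?_
    linarith
  have hq1 : (1:ℝ) ≤ Q^4 := by
    have h12 : (1:ℝ) ≤ Q := by linarith
    calc (1:ℝ) = 1^4 := by norm_num
    _ ≤ Q^4 := pow_le_pow_left₀ (by norm_num) h12 4
  have hdiv := div_le_self (abs_nonneg ((y/s)^3*(Q^2*s*dXa βs βb s - 2*Xa βs βb s*Q*dQ*s - 2*Xa βs βb s*Q^2)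
      + y^2*(dXb βs βb s*Q^2 - 2*Xb βs βb s*Q*dQ)
      + y*(dXc βs βb s*Q^2 - 2*Xc βs βb s*Q*dQ))) hq1
  have hK0 : (0:ℝ) < K := by linarith
  nlinarith [hdiv, hnum, pow_pos hK0 3, sq_nonneg (1+M), mul_pos (mul_pos hK0 hK0) hK0]



lemma slice_t_diff (h : ℝ → ℝ → ℝ) (hreg : ContDiff ℝ 2 fun p : ℝ × ℝ => h p.1 p.2)
    (x t : ℝ) : DifferentiableAt ℝ (fun t' => h x t') t := by
  have : (fun t' => h x t') = (fun p : ℝ × ℝ => h p.1 p.2) ∘ (fun t' : ℝ => (x, t')) := rfl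
  rw [this]
  exact ((hreg.differentiable (by norm_num)) (x, t)).comp t
    ((differentiable_const x).prodMk differentiable_id).differentiableAt

lemma slice_x_diff (h : ℝ → ℝ → ℝ) (hreg : ContDiff ℝ 2 fun p : ℝ × ℝ => h p.1 p.2)
    (x t : ℝ) : DifferentiableAt ℝ (fun x' => h x' t) x := by
  have : (fun x' => h x' t) = (fun p : ℝ × ℝ => h p.1 p.2) ∘ (fun x' : ℝ => (x', t)) := rfl
  rw [this]
  exact ((hreg.differentiable (by norm_num)) (x, t)).comp x
    (differentiable_id.prodMk (differentiable_const t)).differentiableAt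

lemma mixed_hasDerivAt (h : ℝ → ℝ → ℝ) (hreg : ContDiff ℝ 2 fun p : ℝ × ℝ => h p.1 p.2)
    (x t : ℝ) :
    HasDerivAt (fun t' => deriv (fun x' => h x' t') x)
      (deriv (fun x' => deriv (fun t' => h x' t') t) x) t := by
  set f : ℝ × ℝ → ℝ := fun p => h p.1 p.2 with hfdef
  have hfd : Differentiable ℝ f := hreg.differentiable (by norm_num)
  set F := fderiv ℝ f with hFdef
  have hFc : ContDiff ℝ 1 F := hreg.fderiv_right (by norm_num)
  have hFd : Differentiable ℝ F := hFc.differentiable one_ne_zero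
  have hsx : ∀ x₀ t₀ : ℝ, HasDerivAt (fun x' => h x' t₀) (F (x₀, t₀) (1, 0)) x₀ := by
    intro x₀ t₀
    have hline : HasDerivAt (fun x' : ℝ => ((x' : ℝ), t₀)) ((1:ℝ), (0:ℝ)) x₀ :=
      (hasDerivAt_id x₀).prodMk (hasDerivAt_const x₀ t₀)
    exact (hfd (x₀, t₀)).hasFDerivAt.comp_hasDerivAt x₀ hline
  have hst : ∀ x₀ t₀ : ℝ, HasDerivAt (fun t' => h x₀ t') (F (x₀, t₀) (0, 1)) t₀ := by
    intro x₀ t₀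
    have hline : HasDerivAt (fun t' : ℝ => ((x₀ : ℝ), t')) ((0:ℝ), (1:ℝ)) t₀ :=
      (hasDerivAt_const t₀ x₀).prodMk (hasDerivAt_id t₀)
    exact (hfd (x₀, t₀)).hasFDerivAt.comp_hasDerivAt t₀ hline
  have hxrep : (fun t' => deriv (fun x' => h x' t') x) = fun t' => F (x, t') (1, 0) := by
    funext t'; exact (hsx x t').deriv
  have hmrep : deriv (fun x' => deriv (fun t' => h x' t') t) x
      = fderiv ℝ F (x, t) (1, 0) (0, 1) := by
    have hrw : (fun x' => deriv (fun t' => h x' t') t) = fun x' => F (x', t) (0, 1) := by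
      funext x'; exact (hst x' t).deriv
    rw [hrw]
    have hline : HasDerivAt (fun x' : ℝ => ((x' : ℝ), t)) ((1:ℝ), (0:ℝ)) x :=
      (hasDerivAt_id x).prodMk (hasDerivAt_const x t)
    have h1 : HasDerivAt (fun x' => F (x', t)) (fderiv ℝ F (x, t) (1, 0)) x :=
      (hFd (x, t)).hasFDerivAt.comp_hasDerivAt x hline
    have h2 := (ContinuousLinearMap.apply ℝ ℝ ((0:ℝ), (1:ℝ))).hasFDerivAt.comp_hasDerivAt x h1
    exact h2.deriv
  rw [hxrep, hmrep]
  have hline : HasDerivAt (fun t' : ℝ => ((x : ℝ), t')) ((0:ℝ), (1:ℝ)) t :=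
    (hasDerivAt_const t x).prodMk (hasDerivAt_id t)
  have h1 : HasDerivAt (fun t' => F (x, t')) (fderiv ℝ F (x, t) (0, 1)) t :=
    (hFd (x, t)).hasFDerivAt.comp_hasDerivAt t hline
  have h2 := (ContinuousLinearMap.apply ℝ ℝ ((1:ℝ), (0:ℝ))).hasFDerivAt.comp_hasDerivAt t h1
  have hsymm := second_derivative_symmetric (f := f) (f' := F) (f'' := fderiv ℝ F (x, t))
    (fun p => (hfd p).hasFDerivAt) ((hFd (x, t)).hasFDerivAt) ((1:ℝ), (0:ℝ)) ((0:ℝ), (1:ℝ))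
  rw [hsymm]
  exact h2


end TFD

open TFD in
theorem test_field_time_derivative_bounds
    (βs βb : ℝ) (hβs : 0 < βs) (hβb : 0 < βb)
    (L T M : ℝ) (hL : 0 < L) (hT : 0 < T) (hM : 0 < M)
    (h : ℝ → ℝ → ℝ)
    (hpos : ∀ x ∈ Set.Icc (0:ℝ) L, ∀ t ∈ Set.Icc (0:ℝ) T, 0 < h x t ∧ h x t ≤ M)
    (hreg : ContDiff ℝ 2 fun p : ℝ × ℝ => h p.1 p.2)
    (hdx : ∀ x ∈ Set.Icc (0:ℝ) L, ∀ t ∈ Set.Icc (0:ℝ) T,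
      |deriv (fun x' => h x' t) x| ≤ M) :
    ∃ C > 0, ∀ t ∈ Set.Icc (0:ℝ) T, ∀ x ∈ Set.Icc (0:ℝ) L, ∀ y ∈ Set.Icc (0:ℝ) (h x t),
      |deriv (fun t' => phi1 βs βb h x y t') t| ≤
        C * (1 + |deriv (fun t' => h x t') t|) ∧
      |deriv (fun t' => phi2 βs βb h x y t') t| ≤
        C * (|deriv (fun t' => h x t') t| *
              (|deriv (fun t' => h x t') t| +
                |deriv (fun x' => deriv (fun t' => h x' t') t) x|) +
            |deriv (fun t' => h x t') t| +
            |deriv (fun x' => deriv (fun t' => h x' t') t) x|) := by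
  have cXa : Continuous (Xa βs βb) :=
    continuous_iff_continuousAt.mpr fun s => (hasDerivAt_Xa βs βb s).continuousAt
  have cXb : Continuous (Xb βs βb) :=
    continuous_iff_continuousAt.mpr fun s => (hasDerivAt_Xb βs βb s).continuousAt
  have cXc : Continuous (Xc βs βb) :=
    continuous_iff_continuousAt.mpr fun s => (hasDerivAt_Xc βs βb s).continuousAt
  have cq : Continuous (qf βs βb) :=
    continuous_iff_continuousAt.mpr fun s => (hasDerivAt_qf βs βb s).continuousAt
  have cdq : Continuous (dqf βs βb) :=
    continuous_iff_continuousAt.mpr fun s => (hasDerivAt_dqf βs βb s).continuousAt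
  have cma : Continuous (maf βs βb) :=
    continuous_iff_continuousAt.mpr fun s => (hasDerivAt_maf βs βb s).continuousAt
  have cmb : Continuous (mbf βs βb) :=
    continuous_iff_continuousAt.mpr fun s => (hasDerivAt_mbf βs βb s).continuousAt
  have cnc : Continuous (ncf βs βb) :=
    continuous_iff_continuousAt.mpr fun s => (hasDerivAt_ncf βs βb s).continuousAt
  have cdXa : Continuous (dXa βs βb) :=
    cma.neg.mul ((continuous_const.mul continuous_id).add (continuous_const.mul cdq))
  have cdXb : Continuous (dXb βs βb) := continuous_const.mul cmb
  have cdXc : Continuous (dXc βs βb) := continuous_const.mul cnc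
  have cbig : ContinuousOn (fun s => |Xa βs βb s| + |Xb βs βb s| + |Xc βs βb s|
      + |dXa βs βb s| + |dXb βs βb s| + |dXc βs βb s| + |qf βs βb s| + |dqf βs βb s|)
      (Set.Icc (0:ℝ) M) :=
    (((((((cXa.abs.add cXb.abs).add cXc.abs).add cdXa.abs).add cdXb.abs).add
      cdXc.abs).add cq.abs).add cdq.abs).continuousOn
  obtain ⟨K₀, hK₀⟩ :=
    (isCompact_Icc : IsCompact (Set.Icc (0:ℝ) M)).exists_bound_of_continuousOn cbig
  set K := max K₀ 1 with hKdef
  have hK1 : (1:ℝ) ≤ K := le_max_right _ _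
  have hK0 : (0:ℝ) < K := by linarith
  have hMp : (0:ℝ) < 1 + M := by linarith
  have hatom : ∀ s ∈ Set.Icc (0:ℝ) M, |Xa βs βb s| ≤ K ∧ |Xb βs βb s| ≤ K ∧ |Xc βs βb s| ≤ K
      ∧ |dXa βs βb s| ≤ K ∧ |dXb βs βb s| ≤ K ∧ |dXc βs βb s| ≤ K
      ∧ |qf βs βb s| ≤ K ∧ |dqf βs βb s| ≤ K := by
    intro s hs
    have hb := hK₀ s hs
    rw [Real.norm_eq_abs] at hb
    have hb2 := le_trans (le_abs_self _) hb
    have hK' : K₀ ≤ K := le_max_left _ _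
    refine ⟨?_, ?_, ?_, ?_, ?_, ?_, ?_, ?_⟩ <;>
      linarith [abs_nonneg (Xa βs βb s), abs_nonneg (Xb βs βb s), abs_nonneg (Xc βs βb s),
        abs_nonneg (dXa βs βb s), abs_nonneg (dXb βs βb s), abs_nonneg (dXc βs βb s),
        abs_nonneg (qf βs βb s), abs_nonneg (dqf βs βb s)]
  set C := 6*K^3*(1+M)^3 + 6*K*(1+M) + 1 with hCdef
  have hC0 : (0:ℝ) < C := by
    have := mul_pos (pow_pos hK0 3) (pow_pos hMp 3)
    have := mul_pos hK0 hMp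
    nlinarith
  have hC1 : 6*K*(1+M) ≤ C := by
    have := mul_pos (pow_pos hK0 3) (pow_pos hMp 3)
    nlinarith
  have hC2 : 6*K^3*(1+M)^2*M ≤ C := by
    have e1 : (0:ℝ) ≤ 6*K^3*(1+M)^2 := by
      have := mul_pos (pow_pos hK0 3) (pow_pos hMp 2)
      nlinarith
    have e2 : (0:ℝ) ≤ 6*K*(1+M) := by nlinarith [mul_pos hK0 hMp]
    nlinarith [e1, e2]
  have hC3 : 3*K*(1+M)^2 ≤ C := by
    have k2 : (1:ℝ) ≤ K^2 := by nlinarith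
    have k3 : K ≤ K^3 := by nlinarith [mul_le_mul_of_nonneg_left k2 hK0.le]
    have m3 : (1+M)^2 ≤ (1+M)^3 := by nlinarith [sq_nonneg (1+M)]
    have base : K*(1+M)^2 ≤ K^3*(1+M)^3 :=
      mul_le_mul k3 m3 (by positivity) (by positivity)
    have e2 : (0:ℝ) ≤ 6*K*(1+M) := by nlinarith [mul_pos hK0 hMp]
    nlinarith [base, e2, mul_pos hK0 (pow_pos hMp 2)]
  refine ⟨C, hC0, ?_⟩
  intro t htT x hxL y hy
  obtain ⟨hpos1, hsM⟩ := hpos x hxL t htT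
  obtain ⟨a1, a2, a3, a4, a5, a6, a7, a8⟩ := hatom (h x t) ⟨hpos1.le, hsM⟩
  have hDt := (slice_t_diff h hreg x t).hasDerivAt
  constructor
  · -- phi1 bound
    have hposev : ∀ᶠ t' in nhds t, 0 < h x t' :=
      ((slice_t_diff h hreg x t).continuousAt).eventually (eventually_gt_nhds hpos1)
    have hev1 : (fun t' => phi1 βs βb h x y t') =ᶠ[nhds t]
        fun t' => Gfun βs βb y (h x t') := by
      filter_upwards [hposev] with t' hpt'
      exact phi1_eq βs βb h x y t' hpt'.ne'
    have HGc := HasDerivAt.comp t (hasDerivAt_Gfun hβs hβb y hpos1) hDt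
    have HG : HasDerivAt (fun t' => Gfun βs βb y (h x t'))
        (Gd βs βb y (h x t) * deriv (fun t' => h x t') t) t := HGc
    rw [hev1.deriv_eq, HG.deriv, abs_mul]
    have hGb := Gd_bound hβs hβb hK1 hM hpos1 hsM hy.1 hy.2 a1 a2 a3
    have habs := abs_nonneg (deriv (fun t' => h x t') t)
    have step := mul_le_mul_of_nonneg_right hGb habs
    have e1 := mul_le_mul_of_nonneg_right hC1 habs
    nlinarith [step, e1, hC0]
  · -- phi2 bound
    have hU : ∀ᶠ p : ℝ × ℝ in nhds (x, t), 0 < h p.1 p.2 :=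
      (hreg.continuous.tendsto (x, t)).eventually (eventually_gt_nhds hpos1)
    obtain ⟨u, hu, v, hv, huv⟩ := mem_nhds_prod_iff.mp hU
    have hxu : x ∈ u := mem_of_mem_nhds hu
    have hev2 : (fun t' => phi2 βs βb h x y t') =ᶠ[nhds t]
        fun t' => W1f βs βb y (h x t') * deriv (fun x' => h x' t') x := by
      filter_upwards [hv] with t' htv
      have hpxt : 0 < h x t' := huv (Set.mk_mem_prod hxu htv)
      have hevx : (fun x' => psiF βs βb h x' y t') =ᶠ[nhds x]
          fun x' => Wfun βs βb y (h x' t') := by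
        filter_upwards [hu] with x' hx'
        exact psiF_eq βs βb h x' y t' (huv (Set.mk_mem_prod hx' htv)).ne'
      have hDx := (slice_x_diff h hreg x t').hasDerivAt
      have HWc := HasDerivAt.comp x (hasDerivAt_Wfun hβs hβb y hpxt) hDx
      have HW : HasDerivAt (fun x' => Wfun βs βb y (h x' t'))
          (W1f βs βb y (h x t') * deriv (fun x' => h x' t') x) x := HWc
      calc phi2 βs βb h x y t' = deriv (fun x' => psiF βs βb h x' y t') x := rfl
        _ = deriv (fun x' => Wfun βs βb y (h x' t')) x := hevx.deriv_eq
        _ = _ := HW.deriv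
    have Hmix := mixed_hasDerivAt h hreg x t
    have HW1c := HasDerivAt.comp t (hasDerivAt_W1f hβs hβb y hpos1) hDt
    have HW1 : HasDerivAt (fun t' => W1f βs βb y (h x t'))
        (W2f βs βb y (h x t) * deriv (fun t' => h x t') t) t := HW1c
    have Hprod := HW1.mul Hmix
    rw [hev2.deriv_eq, show deriv (fun t' => W1f βs βb y (h x t') * deriv (fun x' => h x' t') x) t = _ from Hprod.deriv]
    have hW1b := W1f_bound hβs hβb hK1 hM hpos1 hsM hy.1 hy.2 a1 a2 a3
    have hW2b := W2f_bound hβs hβb hK1 hM hpos1 hsM hy.1 hy.2 a1 a2 a3 a4 a5 a6 a7 a8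
    have hxtb := hdx x hxL t htT
    have m1 := mul_le_mul_of_nonneg_right hW2b
      (abs_nonneg (deriv (fun t' => h x t') t))
    have m2 : |W2f βs βb y (h x t)| * |deriv (fun t' => h x t') t|
          * |deriv (fun x' => h x' t) x|
        ≤ 6*K^3*(1+M)^2 * |deriv (fun t' => h x t') t| * M :=
      mul_le_mul m1 hxtb (abs_nonneg _)
        (mul_nonneg (le_trans (abs_nonneg _) hW2b) (abs_nonneg _))
    have A1 : |W2f βs βb y (h x t) * deriv (fun t' => h x t') t
          * deriv (fun x' => h x' t) x|
        ≤ 6*K^3*(1+M)^2*M * |deriv (fun t' => h x t') t| := by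
      rw [abs_mul, abs_mul]
      calc |W2f βs βb y (h x t)| * |deriv (fun t' => h x t') t|
            * |deriv (fun x' => h x' t) x|
          ≤ 6*K^3*(1+M)^2 * |deriv (fun t' => h x t') t| * M := m2
        _ = 6*K^3*(1+M)^2*M * |deriv (fun t' => h x t') t| := by ring
    have A2 : |W1f βs βb y (h x t)
          * deriv (fun x' => deriv (fun t' => h x' t') t) x|
        ≤ 3*K*(1+M)^2 * |deriv (fun x' => deriv (fun t' => h x' t') t) x| := by
      rw [abs_mul]
      exact mul_le_mul_of_nonneg_right hW1b (abs_nonneg _)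
    have habs1 := abs_nonneg (deriv (fun t' => h x t') t)
    have habs2 := abs_nonneg (deriv (fun x' => deriv (fun t' => h x' t') t) x)
    calc |W2f βs βb y (h x t) * deriv (fun t' => h x t') t
          * ((fun t' => deriv (fun x' => h x' t') x) t)
          + W1f βs βb y (h x t) * deriv (fun x' => deriv (fun t' => h x' t') t) x|
        ≤ |W2f βs βb y (h x t) * deriv (fun t' => h x t') t
            * deriv (fun x' => h x' t) x|
          + |W1f βs βb y (h x t) * deriv (fun x' => deriv (fun t' => h x' t') t) x| :=
          abs_add_le _ _
      _ ≤ 6*K^3*(1+M)^2*M * |deriv (fun t' => h x t') t|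
          + 3*K*(1+M)^2 * |deriv (fun x' => deriv (fun t' => h x' t') t) x| := by
          linarith
      _ ≤ C * (|deriv (fun t' => h x t') t| * (|deriv (fun t' => h x t') t|
            + |deriv (fun x' => deriv (fun t' => h x' t') t) x|)
          + |deriv (fun t' => h x t') t|
          + |deriv (fun x' => deriv (fun t' => h x' t') t) x|) := by
          have e1 := mul_le_mul_of_nonneg_right hC2 habs1
          have e2 := mul_le_mul_of_nonneg_right hC3 habs2
          have e3 : (0:ℝ) ≤ C * (|deriv (fun t' => h x t') t|
              * (|deriv (fun t' => h x t') t|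
                + |deriv (fun x' => deriv (fun t' => h x' t') t) x|)) :=
            mul_nonneg hC0.le (by positivity)
          nlinarith [e1, e2, e3]
end
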